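/- Let n ≥ 1, Z : Fin n → Fin n → Bool, and σ a permutation of the index type I of M_Z. Then the product over all v ∈ I of the entries (M_Z) v (σ v) is nonzero if and only if there exist i, j ∈ Fin n with Z i j = true such that σ is the 4-cycle sending s ↦ ℓ_i ↦ r_j ↦ t ↦ s and fixing all other elements of I. -/

import Mathlib

/-- The index type for the matrix `M_Z`: the distinguished vertex `s`, the distinguished
vertex `t`, the left vertices `ℓ_i`, and the right vertices `r_j`. -/
abbrev Idx (n : ℕ) := Unit ⊕ Unit ⊕ Fin n ⊕ Fin n

/-- The distinguished index `s`. -/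
def sV (n : ℕ) : Idx n := Sum.inl ()

/-- The distinguished index `t`. -/
def tV (n : ℕ) : Idx n := Sum.inr (Sum.inl ())

/-- The left index `ℓ_i`. -/
def lV {n : ℕ} (i : Fin n) : Idx n := Sum.inr (Sum.inr (Sum.inl i))

/-- The right index `r_j`. -/
def rV {n : ℕ} (j : Fin n) : Idx n := Sum.inr (Sum.inr (Sum.inr j))

/-- The integer matrix `M_Z`: entry `1` at `(s, ℓ_i)`, `(r_j, t)` and `(t, s)`; entry `1` at
`(ℓ_i, r_j)` iff `Z i j = true`; diagonal entries `1` at `(ℓ_i, ℓ_i)` and `(r_j, r_j)`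
(self-loops everywhere except at `s` and `t`); all other entries `0`. -/
def MZ (n : ℕ) (Z : Fin n → Fin n → Bool) : Matrix (Idx n) (Idx n) ℤ :=
  fun v w =>
    match v, w with
    | Sum.inl _, Sum.inr (Sum.inr (Sum.inl _)) => 1                 -- (s, ℓ_i)
    | Sum.inr (Sum.inr (Sum.inr _)), Sum.inr (Sum.inl _) => 1       -- (r_j, t)
    | Sum.inr (Sum.inr (Sum.inl i)), Sum.inr (Sum.inr (Sum.inr j)) =>
        if Z i j then 1 else 0                                      -- (ℓ_i, r_j)
    | Sum.inr (Sum.inl _), Sum.inl _ => 1                           -- (t, s)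
    | Sum.inr (Sum.inr (Sum.inl i)), Sum.inr (Sum.inr (Sum.inl i')) =>
        if i = i' then 1 else 0                                     -- (ℓ_i, ℓ_i)
    | Sum.inr (Sum.inr (Sum.inr j)), Sum.inr (Sum.inr (Sum.inr j')) =>
        if j = j' then 1 else 0                                     -- (r_j, r_j)
    | _, _ => 0

/-- The 4-cycle sending `s ↦ ℓ_i ↦ r_j ↦ t ↦ s` and fixing all other indices. -/
def fourCycle {n : ℕ} (i j : Fin n) : Equiv.Perm (Idx n) :=
  Equiv.swap (sV n) (tV n) * Equiv.swap (sV n) (rV j) * Equiv.swap (sV n) (lV i)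

lemma fc_apply {n : ℕ} (i j : Fin n) (x : Idx n) :
    fourCycle i j x =
      if x = sV n then lV i else if x = lV i then rV j
      else if x = rV j then tV n else if x = tV n then sV n else x := by
  simp only [fourCycle, Equiv.Perm.mul_apply, Equiv.swap_apply_def, sV, tV, lV, rV]
  rcases x with _ | _ | i' | j' <;>
    simp [sV, tV, lV, rV] <;> split_ifs <;> simp_all

theorem prod_MZ_ne_zero_iff (n : ℕ) (hn : 1 ≤ n) (Z : Fin n → Fin n → Bool)
    (σ : Equiv.Perm (Idx n)) :
    (∏ v : Idx n, MZ n Z v (σ v)) ≠ 0 ↔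
      ∃ i j : Fin n, Z i j = true ∧ σ = fourCycle i j := by
  rw [Finset.prod_ne_zero_iff]
  constructor
  · intro h
    -- σ s = lV i
    have hs := h (sV n) (Finset.mem_univ _)
    obtain ⟨i, hi⟩ : ∃ i, σ (sV n) = lV i := by
      rcases hσ : σ (sV n) with _ | _ | i' | j'
      · rw [hσ] at hs; simp [MZ, sV] at hs
      · rw [hσ] at hs; simp [MZ, sV] at hs
      · exact ⟨i', rfl⟩
      · rw [hσ] at hs; simp [MZ, sV] at hs
    -- σ t = s
    have ht := h (tV n) (Finset.mem_univ _)
    have htv : σ (tV n) = sV n := by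
      rcases hσ : σ (tV n) with _ | u | i' | j'
      · rfl
      · rw [hσ] at ht; simp [MZ, tV] at ht
      · rw [hσ] at ht; simp [MZ, tV] at ht
      · rw [hσ] at ht; simp [MZ, tV] at ht
    -- σ (lV i) = rV j with Z i j
    have hl := h (lV i) (Finset.mem_univ _)
    obtain ⟨j, hj, hZ⟩ : ∃ j, σ (lV i) = rV j ∧ Z i j = true := by
      rcases hσ : σ (lV i) with _ | _ | i' | j'
      · rw [hσ] at hl; simp [MZ, lV] at hl
      · rw [hσ] at hl; simp [MZ, lV] at hl
      · rw [hσ] at hl; simp [MZ, lV] at hl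
        exfalso
        subst hl
        exact absurd (σ.injective (hi.trans hσ.symm)) (by simp [sV, lV])
      · rw [hσ] at hl; simp [MZ, lV] at hl
        exact ⟨j', rfl, by simpa using hl⟩
    -- σ (rV j) = t
    have hr := h (rV j) (Finset.mem_univ _)
    have hrv : σ (rV j) = tV n := by
      rcases hσ : σ (rV j) with _ | u | i' | j'
      · rw [hσ] at hr; simp [MZ, rV] at hr
      · cases u; rfl
      · rw [hσ] at hr; simp [MZ, rV] at hr
      · rw [hσ] at hr; simp [MZ, rV] at hr
        exfalso
        subst hr
        exact absurd (σ.injective (hj.trans hσ.symm)) (by simp [lV, rV])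
    -- other lefts fixed
    have hlf : ∀ i', i' ≠ i → σ (lV i') = lV i' := by
      intro i' hne
      have hl' := h (lV i') (Finset.mem_univ _)
      rcases hσ : σ (lV i') with _ | _ | i'' | j'
      · rw [hσ] at hl'; simp [MZ, lV] at hl'
      · rw [hσ] at hl'; simp [MZ, lV] at hl'
      · rw [hσ] at hl'; simp [MZ, lV] at hl'; simp [lV, hl']
      · exfalso
        -- σ (rV j') must be rV j' or t; both impossible
        have hr' := h (rV j') (Finset.mem_univ _)
        rcases hσ2 : σ (rV j') with _ | u | i'' | j''
        · rw [hσ2] at hr'; simp [MZ, rV] at hr'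
        · -- σ rV j' = t = σ rV j, so j' = j, then σ lV i' = rV j = σ lV i
          cases u
          have h1 : rV j' = rV j := σ.injective (hσ2.trans hrv.symm)
          have hjj : j' = j := by simpa [rV] using h1
          subst hjj
          exact hne (by simpa [lV] using σ.injective (hσ.trans hj.symm))
        · rw [hσ2] at hr'; simp [MZ, rV] at hr'
        · rw [hσ2] at hr'; simp [MZ, rV] at hr'
          subst hr'
          exact absurd (σ.injective (hσ.trans hσ2.symm)) (by simp [lV, rV])
    -- other rights fixed
    have hrf : ∀ j', j' ≠ j → σ (rV j') = rV j' := by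
      intro j' hne
      have hr' := h (rV j') (Finset.mem_univ _)
      rcases hσ : σ (rV j') with _ | u | i'' | j''
      · rw [hσ] at hr'; simp [MZ, rV] at hr'
      · cases u
        have : rV j' = rV j := σ.injective (hσ.trans hrv.symm)
        exact absurd (by simpa [rV] using this) hne
      · rw [hσ] at hr'; simp [MZ, rV] at hr'
      · rw [hσ] at hr'; simp [MZ, rV] at hr'; simp [rV, hr']
    refine ⟨i, j, hZ, ?_⟩
    ext x
    rw [fc_apply]
    rcases x with _ | u | i' | j'
    · simpa [sV] using hi
    · cases u; simpa [sV, tV, lV, rV] using htv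
    · by_cases hii : i' = i
      · subst hii; simpa [sV, lV] using hj
      · simpa [sV, lV, rV, tV, hii] using hlf i' hii
    · by_cases hjj : j' = j
      · subst hjj; simpa [sV, lV, rV] using hrv
      · simpa [sV, lV, rV, tV, hjj] using hrf j' hjj
  · rintro ⟨i, j, hZ, rfl⟩ v _
    rw [fc_apply]
    rcases v with _ | u | i' | j'
    · simp [sV, tV, lV, rV, MZ]
    · cases u; simp [sV, tV, lV, rV, MZ]
    · by_cases hii : i' = i
      · subst hii; simp [sV, tV, lV, rV, MZ, hZ]
      · simp [sV, tV, lV, rV, hii, MZ]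
    · by_cases hjj : j' = j
      · subst hjj; simp [sV, tV, lV, rV, MZ]
      · simp [sV, tV, lV, rV, hjj, MZ]
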